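/- For any major k-clique C_1 of a k-tree T (i.e., a k-clique contained in at least 3 distinct (k+1)-cliques of T), there exists a k-clique C_2 adjacent to C_1 such that μ(T; C_2) > μ(T; C_1). -/

import Mathlib

open Finset

variable {V : Type*}

/-- `IsKTreeOn G k s` : the induced subgraph of `G` on the vertex set `s` is a `k`-tree,
following the recursive definition: `K_k` is a `k`-tree, and a `k`-tree grows by adding a
new vertex adjacent exactly to the vertices of some `k`-clique. -/
inductive IsKTreeOn [DecidableEq V] (G : SimpleGraph V) (k : ℕ) : Finset V → Prop
  | base (s : Finset V) : G.IsNClique k s → IsKTreeOn G k s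
  | grow (s : Finset V) (v : V) (C : Finset V) :
      IsKTreeOn G k s → v ∉ s → C ⊆ s → G.IsNClique k C →
      (∀ w ∈ s, G.Adj v w ↔ w ∈ C) → IsKTreeOn G k (insert v s)

/-- `G` is a `k`-tree. -/
def IsKTree [Fintype V] [DecidableEq V] (G : SimpleGraph V) (k : ℕ) : Prop :=
  IsKTreeOn G k Finset.univ

/-- The vertex sets of the sub-`k`-trees of `G` containing the `k`-clique `C`. -/
noncomputable def subKTrees [Fintype V] [DecidableEq V] (G : SimpleGraph V) (k : ℕ)
    (C : Finset V) : Finset (Finset V) := by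
  classical
  exact Finset.univ.filter fun A => C ⊆ A ∧ IsKTreeOn G k A

/-- The local mean order `μ(T; C)`: the average order of the sub-`k`-trees of `G`
containing the `k`-clique `C`. -/
noncomputable def kMean [Fintype V] [DecidableEq V] (G : SimpleGraph V) (k : ℕ)
    (C : Finset V) : ℝ :=
  (∑ A ∈ subKTrees G k C, (A.card : ℝ)) / ((subKTrees G k C).card : ℝ)

/-- The degree of a `k`-clique `C` in `G`: the number of `(k+1)`-cliques of `G`
containing `C`. -/
noncomputable def cliqueDeg [Fintype V] [DecidableEq V] (G : SimpleGraph V) (k : ℕ)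
    (C : Finset V) : ℕ := by
  classical
  exact (Finset.univ.filter fun Q : Finset V => C ⊆ Q ∧ G.IsNClique (k + 1) Q).card

/-- Two (distinct) `k`-cliques are adjacent if they are contained in a common
`(k+1)`-clique. -/
def CliqueAdj (G : SimpleGraph V) (k : ℕ) (C₁ C₂ : Finset V) : Prop :=
  C₁ ≠ C₂ ∧ ∃ Q : Finset V, G.IsNClique (k + 1) Q ∧ C₁ ⊆ Q ∧ C₂ ⊆ Q

/-- `IsPathTypeOn G k s` : the induced subgraph of `G` on `s` is a path-type `k`-tree:
`K_k` and `K_{k+1}` are path-type, and a path-type `k`-tree of order `≥ k+1` grows by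
joining a new vertex to a simplicial `k`-clique (a `k`-clique containing a vertex of
degree `k`). -/
inductive IsPathTypeOn [DecidableEq V] (G : SimpleGraph V) (k : ℕ) : Finset V → Prop
  | base₁ (s : Finset V) : G.IsNClique k s → IsPathTypeOn G k s
  | base₂ (s : Finset V) : G.IsNClique (k + 1) s → IsPathTypeOn G k s
  | grow (s : Finset V) (v : V) (C : Finset V) :
      IsPathTypeOn G k s → k + 1 ≤ s.card → v ∉ s → C ⊆ s → G.IsNClique k C →
      (∃ ℓ ∈ C, (G.neighborSet ℓ ∩ (↑s : Set V)).ncard = k) →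
      (∀ w ∈ s, G.Adj v w ↔ w ∈ C) → IsPathTypeOn G k (insert v s)

section Part1
variable [DecidableEq V] {G : SimpleGraph V} {k : ℕ}

/-- `A` can be built starting from the base `D` by repeatedly gluing new vertices
onto `k`-cliques. -/
inductive BuiltFrom (G : SimpleGraph V) (k : ℕ) (D : Finset V) : Finset V → Prop
  | refl : BuiltFrom G k D D
  | grow (s : Finset V) (v : V) (C : Finset V) :
      BuiltFrom G k D s → v ∉ s → C ⊆ s → G.IsNClique k C →
      (∀ w ∈ s, G.Adj v w ↔ w ∈ C) → BuiltFrom G k D (insert v s)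

lemma BuiltFrom.base_subset {D A : Finset V} (h : BuiltFrom G k D A) : D ⊆ A := by
  induction h with
  | refl => exact Finset.Subset.refl D
  | grow s v C hb hv hC hcl hadj ih => exact ih.trans (Finset.subset_insert v s)

lemma BuiltFrom.isKTreeOn {D A : Finset V} (hD : G.IsNClique k D) (h : BuiltFrom G k D A) :
    IsKTreeOn G k A := by
  induction h with
  | refl => exact IsKTreeOn.base D hD
  | grow s v C hb hv hC hcl hadj ih => exact IsKTreeOn.grow s v C ih hv hC hcl hadj

lemma BuiltFrom.inversion {D A : Finset V} (h : BuiltFrom G k D A) :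
    A = D ∨ ∃ s v Cv, BuiltFrom G k D s ∧ v ∉ s ∧ Cv ⊆ s ∧ G.IsNClique k Cv ∧
      (∀ w ∈ s, G.Adj v w ↔ w ∈ Cv) ∧ A = insert v s := by
  cases h with
  | refl => exact Or.inl rfl
  | grow s v Cv hb hv hC hcl hadj => exact Or.inr ⟨s, v, Cv, hb, hv, hC, hcl, hadj, rfl⟩

/-- Merge: glue a construction rooted at `C₀` on top of a set `s ⊇ C₀`, provided the
new material is disjoint from `s` and has no edges to `s` outside `C₀`. -/
lemma BuiltFrom.merge {D s C₀ t : Finset V} (hs : BuiltFrom G k D s) (ht : BuiltFrom G k C₀ t)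
    (hC₀s : C₀ ⊆ s)
    (hdisj : ∀ x ∈ t, x ∉ C₀ → x ∉ s)
    (hsep : ∀ x ∈ t, x ∉ C₀ → ∀ y ∈ s, y ∉ C₀ → ¬ G.Adj x y) :
    BuiltFrom G k D (s ∪ t) := by
  induction ht with
  | refl =>
      have : s ∪ C₀ = s := Finset.union_eq_left.2 hC₀s
      rwa [this]
  | grow t' v Cv hb hv hC hcl hadj ih =>
      have hC₀t' : C₀ ⊆ t' := hb.base_subset
      have hvC₀ : v ∉ C₀ := fun h => hv (hC₀t' h)
      have hvt : v ∈ insert v t' := Finset.mem_insert_self v t'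
      have hvs : v ∉ s := hdisj v hvt hvC₀
      have ih' : BuiltFrom G k D (s ∪ t') := by
        apply ih
        · intro x hx hxC; exact hdisj x (Finset.mem_insert_of_mem hx) hxC
        · intro x hx hxC y hy hyC; exact hsep x (Finset.mem_insert_of_mem hx) hxC y hy hyC
      have hset : s ∪ insert v t' = insert v (s ∪ t') := Finset.union_insert v s t'
      rw [hset]
      apply BuiltFrom.grow (s ∪ t') v Cv ih'
      · intro h
        rcases Finset.mem_union.1 h with h | h
        · exact hvs h
        · exact hv h
      · exact hC.trans (Finset.subset_union_right)
      · exact hcl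
      · intro w hw
        rcases Finset.mem_union.1 hw with hws | hwt
        · by_cases hwC : w ∈ C₀
          · exact hadj w (hC₀t' hwC)
          · constructor
            · intro hA
              exact absurd hA (hsep v hvt hvC₀ w hws hwC)
            · intro hwCv
              exact absurd hws (hdisj w (Finset.mem_insert_of_mem (hC hwCv)) hwC)
        · exact hadj w hwt

end Part1
section Part2
variable [DecidableEq V] {G : SimpleGraph V} {k : ℕ}

/-- Re-rooting: a `k`-tree can be built starting from any of its `k`-cliques. -/
lemma IsKTreeOn.reroot {A : Finset V} (h : IsKTreeOn G k A) :
    ∀ D : Finset V, D ⊆ A → G.IsNClique k D → BuiltFrom G k D A := by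
  induction h with
  | base s hs =>
      intro D hD hDcl
      have : D = s := Finset.eq_of_subset_of_card_le hD (by rw [hs.2, hDcl.2])
      rw [← this]; exact BuiltFrom.refl
  | grow s v Cv hb hv hC hcl hadj ih =>
      intro D hD hDcl
      by_cases hvD : v ∈ D
      · have ihc : BuiltFrom G k Cv s := ih Cv hC hcl
        have hvCv : v ∉ Cv := fun h => hv (hC h)
        have hDv : ∀ x ∈ D, x ≠ v → x ∈ Cv := by
          intro x hx hne
          have hxs : x ∈ s := by
            rcases Finset.mem_insert.1 (hD hx) with h | h
            · exact absurd h hne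
            · exact h
          have : G.Adj v x := hDcl.1 hvD hx (Ne.symm hne)
          exact (hadj x hxs).1 this
        set Q : Finset V := insert v Cv with hQ
        have hQcl : G.IsNClique (k+1) Q := hcl.insert (fun b hb => (hadj b (hC hb)).2 hb)
        have hDQ : D ⊆ Q := by
          intro x hx
          by_cases hxv : x = v
          · rw [hxv]; exact Finset.mem_insert_self v Cv
          · exact Finset.mem_insert_of_mem (hDv x hx hxv)
        have hcard : D.card < Q.card := by rw [hDcl.2, hQcl.2]; omega
        obtain ⟨z, hzQ, hzD⟩ := Finset.not_subset.1
          (fun hsub : Q ⊆ D => absurd (Finset.card_le_card hsub) (by omega))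
        have hQD : Q = insert z D := by
          refine (Finset.eq_of_subset_of_card_le ?_ ?_).symm
          · intro x hx
            rcases Finset.mem_insert.1 hx with h | h
            · rw [h]; exact hzQ
            · exact hDQ h
          · rw [Finset.card_insert_of_notMem hzD, hDcl.2, hQcl.2]
        have step1 : BuiltFrom G k D Q := by
          rw [hQD]
          refine BuiltFrom.grow D z D BuiltFrom.refl hzD (Finset.Subset.refl D) hDcl ?_
          intro w hw
          refine ⟨fun _ => hw, fun _ => hQcl.1 hzQ (hDQ hw) (fun h => hzD (h ▸ hw))⟩
        have hmerge : BuiltFrom G k D (Q ∪ s) := by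
          refine step1.merge ihc (Finset.subset_insert v Cv) ?_ ?_
          · intro x hx hxCv
            intro hxQ
            rcases Finset.mem_insert.1 hxQ with h | h
            · exact hv (h ▸ hx)
            · exact hxCv h
          · intro x hx hxCv y hyQ hyCv
            have hyv : y = v := by
              rcases Finset.mem_insert.1 hyQ with h | h
              · exact h
              · exact absurd h hyCv
            rw [hyv]
            intro hAdj
            exact hxCv ((hadj x hx).1 hAdj.symm)
        have : Q ∪ s = insert v s := by
          rw [hQ, Finset.insert_union, Finset.union_eq_right.2 hC]
        rwa [this] at hmerge
      · have hDs : D ⊆ s := by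
          intro x hx
          rcases Finset.mem_insert.1 (hD hx) with h | h
          · exact absurd (h ▸ hx) hvD
          · exact h
        exact BuiltFrom.grow s v Cv (ih D hDs hDcl) hv hC hcl hadj

/-- Restriction: removing a set `U` that is separated (within `A`) from the rest by `D`
preserves being built from `D`. -/
lemma BuiltFrom.restrict {D A U : Finset V} (h : BuiltFrom G k D A)
    (hUD : ∀ x ∈ U, x ∉ D) :
    (∀ x ∈ U, ∀ y ∈ A, G.Adj x y → y ∈ U ∨ y ∈ D) → BuiltFrom G k D (A \ U) := by
  induction h with
  | refl =>
      intro _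
      have : D \ U = D := by
        ext x
        simp only [Finset.mem_sdiff]
        exact ⟨fun h => h.1, fun h => ⟨h, fun hxU => hUD x hxU h⟩⟩
      rw [this]; exact BuiltFrom.refl
  | grow s v Cv hb hv hC hcl hadj ih =>
      intro hsep
      have ih' := ih (fun x hx y hy hadj' => hsep x hx y (Finset.mem_insert_of_mem hy) hadj')
      by_cases hvU : v ∈ U
      · have : (insert v s) \ U = s \ U := by
          ext x
          simp only [Finset.mem_sdiff, Finset.mem_insert]
          constructor
          · rintro ⟨(rfl | hxs), hxU⟩
            · exact absurd hvU hxU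
            · exact ⟨hxs, hxU⟩
          · rintro ⟨hxs, hxU⟩; exact ⟨Or.inr hxs, hxU⟩
        rw [this]; exact ih'
      · have hset : (insert v s) \ U = insert v (s \ U) := by
          ext x
          simp only [Finset.mem_sdiff, Finset.mem_insert]
          constructor
          · rintro ⟨(rfl | hxs), hxU⟩
            · exact Or.inl rfl
            · exact Or.inr ⟨hxs, hxU⟩
          · rintro (rfl | ⟨hxs, hxU⟩)
            · exact ⟨Or.inl rfl, hvU⟩
            · exact ⟨Or.inr hxs, hxU⟩
        rw [hset]
        refine BuiltFrom.grow (s \ U) v Cv ih' ?_ ?_ hcl ?_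
        · intro h; exact hv (Finset.mem_sdiff.1 h).1
        · intro x hx
          have hxs : x ∈ s := hC hx
          have hxU : x ∉ U := by
            intro hxU
            have hAdjvx : G.Adj v x := (hadj x hxs).2 hx
            rcases hsep x hxU v (Finset.mem_insert_self v s) hAdjvx.symm with h | h
            · exact hvU h
            · exact hv (hb.base_subset h)
          exact Finset.mem_sdiff.2 ⟨hxs, hxU⟩
        · intro w hw; exact hadj w (Finset.mem_sdiff.1 hw).1
end Part2
set_option linter.unusedSectionVars false

section Part3
variable [DecidableEq V] {G : SimpleGraph V} {k : ℕ}

/-- The graph `G` with all vertices of `D` made isolated. -/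
def Hout (G : SimpleGraph V) (D : Finset V) : SimpleGraph V where
  Adj x y := G.Adj x y ∧ x ∉ D ∧ y ∉ D
  symm := ⟨by rintro x y ⟨h, hx, hy⟩; exact ⟨h.symm, hy, hx⟩⟩
  loopless := ⟨by rintro x ⟨h, _, _⟩; exact G.loopless.irrefl x h⟩

/-- Reachability avoiding `D`, within the vertex set `s`. -/
inductive ReachIn (G : SimpleGraph V) (D : Finset V) (s : Finset V) : V → V → Prop
  | refl (v : V) (hs : v ∈ s) (hD : v ∉ D) : ReachIn G D s v v
  | cons {a b c : V} (hab : G.Adj a b) (has : a ∈ s) (haD : a ∉ D)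
      (hbs : b ∈ s) (hbD : b ∉ D) (h : ReachIn G D s b c) : ReachIn G D s a c

namespace ReachIn

lemma left_mem {D s : Finset V} {a c : V} (h : ReachIn G D s a c) : a ∈ s ∧ a ∉ D := by
  cases h with
  | refl v hs hD => exact ⟨hs, hD⟩
  | cons hab has haD hbs hbD h => exact ⟨has, haD⟩

lemma snoc {D s : Finset V} {a b c : V} (h : ReachIn G D s a b) (hbc : G.Adj b c)
    (hcs : c ∈ s) (hcD : c ∉ D) : ReachIn G D s a c := by
  induction h with
  | refl v hs hD => exact ReachIn.cons hbc hs hD hcs hcD (ReachIn.refl c hcs hcD)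
  | cons hab has haD hbs hbD h ih => exact ReachIn.cons hab has haD hbs hbD (ih hbc)

lemma symm {D s : Finset V} {a c : V} (h : ReachIn G D s a c) : ReachIn G D s c a := by
  induction h with
  | refl v hs hD => exact ReachIn.refl v hs hD
  | cons hab has haD hbs hbD h ih => exact ih.snoc hab.symm has haD

lemma trans {D s : Finset V} {a b c : V} (h : ReachIn G D s a b) (h' : ReachIn G D s b c) :
    ReachIn G D s a c := by
  induction h with
  | refl v hs hD => exact h'
  | cons hab has haD hbs hbD h ih => exact ReachIn.cons hab has haD hbs hbD (ih h')

lemma mono {D s t : Finset V} (hst : s ⊆ t) {a c : V} (h : ReachIn G D s a c) :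
    ReachIn G D t a c := by
  induction h with
  | refl v hs hD => exact ReachIn.refl v (hst hs) hD
  | cons hab has haD hbs hbD h ih => exact ReachIn.cons hab (hst has) haD (hst hbs) hbD ih

lemma to_reachable {D s : Finset V} {a c : V} (h : ReachIn G D s a c) :
    (Hout G D).Reachable a c := by
  induction h with
  | refl v hs hD => exact SimpleGraph.Reachable.refl v
  | cons hab has haD hbs hbD h ih =>
      exact (SimpleGraph.Adj.reachable (G := Hout G D) ⟨hab, haD, hbD⟩).trans ih

end ReachIn

lemma reachIn_univ_of_walk [Fintype V] {D : Finset V} :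
    ∀ {a c : V}, (Hout G D).Walk a c → a ∉ D → ReachIn G D Finset.univ a c := by
  intro a c w
  induction w with
  | nil => intro haD; exact ReachIn.refl _ (Finset.mem_univ _) haD
  | @cons u v d huv w ih =>
      intro haD
      obtain ⟨huvG, huD, hvD⟩ := huv
      exact ReachIn.cons huvG (Finset.mem_univ u) huD (Finset.mem_univ v) hvD (ih hvD)

lemma reachIn_univ_of_reachable [Fintype V] {D : Finset V} {a c : V}
    (haD : a ∉ D) (h : (Hout G D).Reachable a c) : ReachIn G D Finset.univ a c := by
  obtain ⟨w⟩ := h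
  exact reachIn_univ_of_walk w haD

/-- Walk surgery: reachability within `insert x s` (avoiding `D`) between vertices other
than `x` can be rerouted within `s`, when `x` was glued onto the clique `Cx`. -/
lemma reachIn_insert_elim {D s Cx : Finset V} {x : V}
    (hxs : x ∉ s) (hCx : Cx ⊆ s) (hclx : G.IsClique (Cx : Set V))
    (hadjx : ∀ w ∈ s, G.Adj x w ↔ w ∈ Cx) :
    ∀ {a c : V}, ReachIn G D (insert x s) a c → c ≠ x →
      (a = x → ∀ p ∈ Cx, p ∉ D → ReachIn G D s p c) ∧ (a ≠ x → ReachIn G D s a c) := by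
  intro a c h
  induction h with
  | refl v hs hD =>
      intro hcx
      constructor
      · intro hvx; exact absurd hvx hcx
      · intro hvx
        exact ReachIn.refl v (Finset.mem_of_mem_insert_of_ne hs hvx) hD
  | @cons a b c hab has haD hbs hbD h ih =>
      intro hcx
      have ih' := ih hcx
      constructor
      · intro hax
        subst hax
        have hbx : b ≠ a := fun h => hab.ne h.symm
        have hbs' : b ∈ s := Finset.mem_of_mem_insert_of_ne hbs hbx
        have hbCx : b ∈ Cx := (hadjx b hbs').1 hab
        have hbc : ReachIn G D s b c := ih'.2 hbx
        intro p hp hpD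
        by_cases hpb : p = b
        · rw [hpb]; exact hbc
        · exact ReachIn.cons (hclx hp hbCx hpb) (hCx hp) hpD hbs' hbD hbc
      · intro hax
        have has' : a ∈ s := Finset.mem_of_mem_insert_of_ne has hax
        by_cases hbx : b = x
        · have haCx : a ∈ Cx := (hadjx a has').1 (hbx ▸ hab).symm
          exact ih'.1 hbx a haCx haD
        · exact ReachIn.cons hab has' haD (Finset.mem_of_mem_insert_of_ne hbs hbx) hbD
            (ih'.2 hbx)

/-- Distinct extension vertices of the `k`-set `D` are not connected outside `D`. -/
lemma BuiltFrom.ext_unique {D A : Finset V} (h : BuiltFrom G k D A) (hDcard : D.card = k) :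
    ∀ p q : V, p ∉ D → q ∉ D → (∀ c ∈ D, G.Adj p c) → (∀ c ∈ D, G.Adj q c) →
      ReachIn G D A p q → p = q := by
  induction h with
  | refl =>
      intro p q hpD _ _ _ hreach
      exact absurd hreach.left_mem.1 hpD
  | grow s x Cx hb hxs hCxs hclx hadjx ih =>
      intro p q hpD hqD hpadj hqadj hreach
      have hDs : D ⊆ s := hb.base_subset
      have hxD : x ∉ D := fun h => hxs (hDs h)
      have hext_eq : ∀ r : V, r = x → (∀ c ∈ D, G.Adj r c) → Cx = D := by
        rintro r rfl hradj
        have hsub : D ⊆ Cx := fun c hc => (hadjx c (hDs hc)).1 (hradj c hc)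
        exact (Finset.eq_of_subset_of_card_le hsub
          (le_of_eq (hclx.2.trans hDcard.symm))).symm
      by_cases hpx : p = x
      · cases hreach with
        | refl v hs hD => rfl
        | @cons a b c hab has haD hbs hbD hrest =>
            have hbx : b ≠ x := by
              intro hbe
              rw [hbe, hpx] at hab
              exact G.loopless.irrefl x hab
            have hbs' : b ∈ s := Finset.mem_of_mem_insert_of_ne hbs hbx
            have hbCx : b ∈ Cx := (hadjx b hbs').1 (hpx ▸ hab)
            rw [hext_eq p hpx hpadj] at hbCx
            exact absurd hbCx hbD
      · by_cases hqx : q = x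
        · cases hreach.symm with
          | refl v hs hD => rfl
          | @cons a b c hab has haD hbs hbD hrest =>
              have hbx : b ≠ x := by
                intro hbe
                rw [hbe, hqx] at hab
                exact G.loopless.irrefl x hab
              have hbs' : b ∈ s := Finset.mem_of_mem_insert_of_ne hbs hbx
              have hbCx : b ∈ Cx := (hadjx b hbs').1 (hqx ▸ hab)
              rw [hext_eq q hqx hqadj] at hbCx
              exact absurd hbCx hbD
        · have hreach' : ReachIn G D s p q :=
            (reachIn_insert_elim hxs hCxs hclx.1 hadjx hreach hqx).2 hpx
          exact ih p q hpD hqD hpadj hqadj hreach'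

/-- Every vertex of a rooted sub-`k`-tree outside the root is reachable (outside `D`)
from an extension vertex of `D` lying in the sub-`k`-tree. -/
lemma BuiltFrom.exists_ext {D A : Finset V} (h : BuiltFrom G k D A) (hDcard : D.card = k) :
    ∀ w ∈ A, w ∉ D → ∃ z, z ∈ A ∧ z ∉ D ∧ (∀ c ∈ D, G.Adj z c) ∧ ReachIn G D A z w := by
  induction h with
  | refl =>
      intro w hw hwD; exact absurd hw hwD
  | grow s x Cx hb hxs hCxs hclx hadjx ih =>
      intro w hw hwD
      have hDs : D ⊆ s := hb.base_subset
      have hxD : x ∉ D := fun h => hxs (hDs h)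
      by_cases hwx : w = x
      · subst hwx
        by_cases hCD : Cx = D
        · refine ⟨w, Finset.mem_insert_self w s, hxD, ?_, ?_⟩
          · intro c hc
            exact (hadjx c (hDs hc)).2 (hCD ▸ hc)
          · exact ReachIn.refl w (Finset.mem_insert_self w s) hxD
        · have : ∃ y ∈ Cx, y ∉ D := by
            apply Finset.not_subset.1
            intro hsub
            exact hCD (Finset.eq_of_subset_of_card_le hsub
              (le_of_eq (hDcard.trans hclx.2.symm)))
          obtain ⟨y, hyCx, hyD⟩ := this
          obtain ⟨z, hzA, hzD, hzadj, hzreach⟩ := ih y (hCxs hyCx) hyD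
          refine ⟨z, Finset.mem_insert_of_mem hzA, hzD, hzadj, ?_⟩
          exact (hzreach.mono (Finset.subset_insert w s)).snoc
            ((hadjx y (hCxs hyCx)).2 hyCx).symm (Finset.mem_insert_self w s) hxD
      · have hws : w ∈ s := Finset.mem_of_mem_insert_of_ne hw hwx
        obtain ⟨z, hzA, hzD, hzadj, hzreach⟩ := ih w hws hwD
        exact ⟨z, Finset.mem_insert_of_mem hzA, hzD, hzadj,
          hzreach.mono (Finset.subset_insert x s)⟩

/-- Key separation lemma: if a sub-`k`-tree rooted at `D` contains a vertex `w ∉ D`,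
and `z` is an extension vertex of `D` reachable from `w` outside `D`, then `z` belongs
to the sub-`k`-tree. -/
lemma BuiltFrom.ext_mem [Fintype V] {D A : Finset V}
    (huniv : BuiltFrom G k D Finset.univ) (h : BuiltFrom G k D A) (hDcard : D.card = k)
    {z w : V} (hzD : z ∉ D) (hzadj : ∀ c ∈ D, G.Adj z c) (hw : w ∈ A) (hwD : w ∉ D)
    (hreach : (Hout G D).Reachable z w) : z ∈ A := by
  obtain ⟨z', hz'A, hz'D, hz'adj, hz'reach⟩ := h.exists_ext hDcard w hw hwD
  have hr2 : (Hout G D).Reachable z' z :=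
    (hz'reach.to_reachable).trans hreach.symm
  have : ReachIn G D Finset.univ z' z := reachIn_univ_of_reachable hz'D hr2
  have := huniv.ext_unique hDcard z' z hz'D hzD hz'adj hzadj this
  exact this ▸ hz'A
end Part3
section Part3b
variable [DecidableEq V] {G : SimpleGraph V} {k : ℕ}

lemma ReachIn.right_mem {D s : Finset V} {a c : V} (h : ReachIn G D s a c) :
    c ∈ s ∧ c ∉ D := by
  induction h with
  | refl v hs hD => exact ⟨hs, hD⟩
  | cons hab has haD hbs hbD h ih => exact ih

/-- Transfer a walk avoiding `D` to a walk avoiding `D'`, provided everything reachable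
from the start avoids `D'`. -/
lemma ReachIn.transfer {D D' s : Finset V} {a c : V} (h : ReachIn G D s a c)
    (hD' : ∀ y, ReachIn G D s a y → y ∉ D') : ReachIn G D' s a c := by
  induction h with
  | refl v hs hD => exact ReachIn.refl v hs (hD' v (ReachIn.refl v hs hD))
  | @cons a b c hab has haD hbs hbD h ih =>
      have haD' : a ∉ D' := hD' a (ReachIn.refl a has haD)
      have hbD' : b ∉ D' := hD' b (ReachIn.cons hab has haD hbs hbD (ReachIn.refl b hbs hbD))
      refine ReachIn.cons hab has haD' hbs hbD' (ih ?_)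
      intro y hy
      exact hD' y (ReachIn.cons hab has haD hbs hbD hy)
end Part3b
section Part4
variable {α : Type*} [DecidableEq α]

/-- A family of finsets is accessible if every nonempty member has an element whose
removal stays in the family. -/
def Accessible (S : Finset (Finset α)) : Prop := ∀ ρ ∈ S, ρ ≠ ∅ → ∃ x ∈ ρ, ρ.erase x ∈ S

lemma Accessible.chain_card {S : Finset (Finset α)} (hS : Accessible S) :
    ∀ n : ℕ, ∀ ρ ∈ S, ρ.card = n → n + 1 ≤ (S.filter (· ⊆ ρ)).card := by
  intro n
  induction n with
  | zero =>
      intro ρ hρ hcard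
      have : ρ ∈ S.filter (· ⊆ ρ) := Finset.mem_filter.2 ⟨hρ, Finset.Subset.refl ρ⟩
      have := Finset.card_pos.2 ⟨ρ, this⟩
      omega
  | succ n ih =>
      intro ρ hρ hcard
      have hne : ρ ≠ ∅ := by
        intro h; rw [h] at hcard; simp at hcard
      obtain ⟨x, hx, hxe⟩ := hS ρ hρ hne
      have hsub : S.filter (· ⊆ ρ.erase x) ⊆ (S.filter (· ⊆ ρ)).erase ρ := by
        intro τ hτ
        obtain ⟨hτS, hτsub⟩ := Finset.mem_filter.1 hτ
        refine Finset.mem_erase.2 ⟨?_, Finset.mem_filter.2 ⟨hτS,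
          hτsub.trans (Finset.erase_subset x ρ)⟩⟩
        intro hτρ
        exact (Finset.notMem_erase x ρ) (hτsub (hτρ ▸ hx))
      have h1 := ih (ρ.erase x) hxe (by rw [Finset.card_erase_of_mem hx, hcard]; rfl)
      have h2 := Finset.card_le_card hsub
      have h3 : ((S.filter (· ⊆ ρ)).erase ρ).card = (S.filter (· ⊆ ρ)).card - 1 :=
        Finset.card_erase_of_mem (Finset.mem_filter.2 ⟨hρ, Finset.Subset.refl ρ⟩)
      have h4 : 0 < (S.filter (· ⊆ ρ)).card :=
        Finset.card_pos.2 ⟨ρ, Finset.mem_filter.2 ⟨hρ, Finset.Subset.refl ρ⟩⟩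
      omega

lemma Accessible.mem_card_lt {S : Finset (Finset α)} (hS : Accessible S)
    {ρ : Finset α} (hρ : ρ ∈ S) : ρ.card < S.card := by
  have := hS.chain_card ρ.card ρ hρ rfl
  have h2 := Finset.card_le_card (Finset.filter_subset (· ⊆ ρ) S)
  omega

lemma Accessible.sum_card_bound :
    ∀ (S : Finset (Finset α)), Accessible S →
      2 * (∑ ρ ∈ S, ρ.card) + S.card ≤ S.card * S.card := by
  intro S
  induction S using Finset.strongInduction with
  | _ S ih =>
    intro hS
    rcases Finset.eq_empty_or_nonempty S with rfl | hne
    · simp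
    obtain ⟨σ, hσS, hσmax⟩ := Finset.exists_max_image S Finset.card hne
    have hcards : S.card = (S.erase σ).card + 1 := by
      rw [Finset.card_erase_of_mem hσS]
      have := Finset.card_pos.2 ⟨σ, hσS⟩
      omega
    have hacc' : Accessible (S.erase σ) := by
      intro ρ hρ hρne
      obtain ⟨hρσ, hρS⟩ := Finset.mem_erase.1 hρ
      obtain ⟨x, hx, hxe⟩ := hS ρ hρS hρne
      refine ⟨x, hx, Finset.mem_erase.2 ⟨?_, hxe⟩⟩
      intro heq
      have h1 : (ρ.erase x).card = ρ.card - 1 := Finset.card_erase_of_mem hx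
      have h2 : ρ.card ≤ σ.card := hσmax ρ hρS
      have h3 : 0 < ρ.card := Finset.card_pos.2 ⟨x, hx⟩
      rw [heq] at h1
      omega
    have hsum : ∑ ρ ∈ S, ρ.card = (∑ ρ ∈ S.erase σ, ρ.card) + σ.card :=
      (Finset.sum_erase_add S _ hσS).symm
    have hIH := ih (S.erase σ) (Finset.erase_ssubset hσS) hacc'
    have hσcard : σ.card < S.card := hS.mem_card_lt hσS
    nlinarith [hIH, hσcard, hcards, hsum]

end Part4
section Part5

set_option maxHeartbeats 1600000 in
lemma key_arith (k r f2 f3 w1 w2 w3 nB WB : ℤ)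
    (hk : 0 ≤ k) (hr : 1 ≤ r) (hf2 : r + 1 ≤ f2) (hf3 : r + 1 ≤ f3)
    (hnB : 0 ≤ nB) (hnBr : nB ≤ r) (hWB : k * nB ≤ WB) (hw1 : r ≤ w1)
    (hw2 : 0 ≤ w2) (hw3 : 0 ≤ w3)
    (hw2' : 2 * w2 + f2 ≤ f2 * f2) (hw3' : 2 * w3 + f3 ≤ f3 * f3) :
    ((r+1) * f2 * f3 * k + f2 * f3 * w1 + (r+1) * f3 * w2 + (r+1) * f2 * w3)
        * (r * f2 * f3 + nB)
      < (r * f2 * f3 * k + f2 * f3 * w1 + r * f3 * w2 + r * f2 * w3 + WB)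
        * ((r+1) * f2 * f3) := by
  have hf2pos : (0:ℤ) < f2 := by linarith
  have hf3pos : (0:ℤ) < f3 := by linarith
  have hrpos : (0:ℤ) ≤ r := by linarith
  set W1 := (r+1) * f2 * f3 * k + f2 * f3 * w1 + (r+1) * f3 * w2 + (r+1) * f2 * w3 with hW1
  set n2 := r * f2 * f3 + nB with hn2
  set W2 := r * f2 * f3 * k + f2 * f3 * w1 + r * f3 * w2 + r * f2 * w3 + WB with hW2
  set n1 := (r+1) * f2 * f3 with hn1
  have hEq : W2 * n1 - W1 * n2
      = f2 * f3 * w1 * (f2 * f3 - nB) + (r+1) * f2 * f3 * (WB - k * nB)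
        - nB * (r+1) * (f3 * w2 + f2 * w3) := by
    rw [hW1, hW2, hn1, hn2]; ring
  have hT2 : 0 ≤ (r+1) * f2 * f3 * (WB - k * nB) := by
    have h0 : (0:ℤ) ≤ WB - k * nB := by linarith
    have h1 : (0:ℤ) ≤ (r+1) * f2 * f3 := by positivity
    exact mul_nonneg h1 h0
  have hf23 : f2 * 1 ≤ f2 * f3 := mul_le_mul_of_nonneg_left (by linarith) hf2pos.le
  have hfnB : nB < f2 * f3 := by linarith
  have hT1 : f2 * f3 * r * (f2 * f3 - nB) ≤ f2 * f3 * w1 * (f2 * f3 - nB) := by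
    have h1 : (0:ℤ) ≤ f2 * f3 - nB := by linarith
    have h2 : f2 * f3 * r ≤ f2 * f3 * w1 :=
      mul_le_mul_of_nonneg_left hw1 (by positivity)
    exact mul_le_mul_of_nonneg_right h2 h1
  have hT3a : 2 * (f3 * w2 + f2 * w3) ≤ f2 * f3 * (f2 + f3 - 2) := by
    have h1 : f3 * (2 * w2 + f2) ≤ f3 * (f2 * f2) :=
      mul_le_mul_of_nonneg_left hw2' hf3pos.le
    have h2 : f2 * (2 * w3 + f3) ≤ f2 * (f3 * f3) :=
      mul_le_mul_of_nonneg_left hw3' hf2pos.le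
    nlinarith [h1, h2]
  have hnB1 : (0:ℤ) ≤ nB * (r+1) := by positivity
  have hT3 : 2 * (nB * (r+1) * (f3 * w2 + f2 * w3))
      ≤ nB * (r+1) * (f2 * f3 * (f2 + f3 - 2)) := by
    have := mul_le_mul_of_nonneg_left hT3a hnB1
    nlinarith [this]
  have h2' : (0:ℤ) ≤ (r+1) * (f2 * f3 * (f2 + f3 - 2)) := by
    have : (0:ℤ) ≤ f2 + f3 - 2 := by linarith
    positivity
  have hT3b : nB * (r+1) * (f2 * f3 * (f2 + f3 - 2))
      ≤ r * (r+1) * (f2 * f3 * (f2 + f3 - 2)) := by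
    have := mul_le_mul_of_nonneg_right hnBr h2'
    nlinarith [this]
  have hT1b : 2 * (f2 * f3 * r * (f2 * f3 - r)) ≤ 2 * (f2 * f3 * r * (f2 * f3 - nB)) := by
    have h0 : (0:ℤ) ≤ f2 * f3 * r := by positivity
    have := mul_le_mul_of_nonneg_left (by linarith : f2 * f3 - r ≤ f2 * f3 - nB) h0
    nlinarith [this]
  have hA : (r+1) * f2 ≤ f3 * f2 := mul_le_mul_of_nonneg_right hf3 hf2pos.le
  have hB : (r+1) * f3 ≤ f2 * f3 := mul_le_mul_of_nonneg_right hf2 hf3pos.le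
  have hC : (0:ℤ) ≤ 2 * (f2 * f3) - (r+1) * f2 - (r+1) * f3 := by nlinarith [hA, hB]
  have hD : (0:ℤ) ≤ (r * (f2 * f3)) * (2 * (f2 * f3) - (r+1) * f2 - (r+1) * f3) :=
    mul_nonneg (by positivity) hC
  have hmain : r * (r+1) * (f2 * f3 * (f2 + f3 - 2)) + 2 * (r * (f2 * f3))
      ≤ 2 * (f2 * f3 * r * (f2 * f3 - r)) := by nlinarith [hD]
  have hrff : (0:ℤ) < r * (f2 * f3) := by positivity
  have hfinal : 0 < W2 * n1 - W1 * n2 := by linarith [hEq, hT2, hT1, hT3, hT3b, hT1b, hmain]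
  linarith [hfinal]

end Part5
section Part6a
variable [DecidableEq V] {G : SimpleGraph V} {k : ℕ}

/-- The connected component of `v` outside `C`. -/
noncomputable def compF (G : SimpleGraph V) [Fintype V] (C : Finset V) (v : V) : Finset V := by
  classical
  exact Finset.univ.filter fun x => (Hout G C).Reachable v x

/-- The family of extensions of `C` inside the region `U`. -/
noncomputable def extFam (G : SimpleGraph V) (k : ℕ) (C U : Finset V) : Finset (Finset V) := by
  classical
  exact U.powerset.filter fun ρ => BuiltFrom G k C (C ∪ ρ)

lemma mem_compF [Fintype V] {C : Finset V} {v x : V} :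
    x ∈ compF G C v ↔ (Hout G C).Reachable v x := by
  simp [compF]

lemma mem_extFam {C U ρ : Finset V} :
    ρ ∈ extFam G k C U ↔ ρ ⊆ U ∧ BuiltFrom G k C (C ∪ ρ) := by
  simp [extFam, Finset.mem_powerset]

lemma extFam_mono {C U U' : Finset V} (h : U ⊆ U') : extFam G k C U ⊆ extFam G k C U' := by
  intro ρ hρ
  rw [mem_extFam] at hρ ⊢
  exact ⟨hρ.1.trans h, hρ.2⟩

lemma mem_subKTrees_iff [Fintype V] {C A : Finset V} (hC : G.IsNClique k C) :
    A ∈ subKTrees G k C ↔ BuiltFrom G k C A := by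
  have : A ∈ subKTrees G k C ↔ C ⊆ A ∧ IsKTreeOn G k A := by
    simp [subKTrees]
  rw [this]
  constructor
  · rintro ⟨h1, h2⟩
    exact h2.reroot C h1 hC
  · intro h
    exact ⟨h.base_subset, h.isKTreeOn hC⟩

lemma ext_of_clique {C Q : Finset V} (hC : G.IsNClique k C) (hQ : G.IsNClique (k+1) Q)
    (hCQ : C ⊆ Q) : ∃ v, v ∉ C ∧ Q = insert v C ∧ (∀ c ∈ C, G.Adj v c) := by
  have hcard : C.card < Q.card := by rw [hC.2, hQ.2]; omega
  obtain ⟨v, hvQ, hvC⟩ := Finset.not_subset.1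
    (fun hsub : Q ⊆ C => absurd (Finset.card_le_card hsub) (by omega))
  refine ⟨v, hvC, ?_, ?_⟩
  · refine (Finset.eq_of_subset_of_card_le ?_ ?_).symm
    · intro x hx
      rcases Finset.mem_insert.1 hx with rfl | hx
      · exact hvQ
      · exact hCQ hx
    · rw [Finset.card_insert_of_notMem hvC, hC.2, hQ.2]
  · intro c hc
    exact hQ.1 hvQ (hCQ hc) (fun h => hvC (h ▸ hc))

lemma three_cliques [Fintype V] {C : Finset V} (hmaj : 3 ≤ cliqueDeg G k C) :
    ∃ Q₁ Q₂ Q₃ : Finset V, Q₁ ≠ Q₂ ∧ Q₁ ≠ Q₃ ∧ Q₂ ≠ Q₃ ∧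
      (C ⊆ Q₁ ∧ G.IsNClique (k+1) Q₁) ∧ (C ⊆ Q₂ ∧ G.IsNClique (k+1) Q₂) ∧
      (C ⊆ Q₃ ∧ G.IsNClique (k+1) Q₃) := by
  classical
  have hmem : ∀ Q : Finset V,
      Q ∈ (Finset.univ.filter fun Q : Finset V => C ⊆ Q ∧ G.IsNClique (k + 1) Q) ↔
        C ⊆ Q ∧ G.IsNClique (k+1) Q := by
    intro Q; simp
  set S := (Finset.univ.filter fun Q : Finset V => C ⊆ Q ∧ G.IsNClique (k + 1) Q) with hS
  have hcard : 3 ≤ S.card := by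
    have he : cliqueDeg G k C = S.card := by
      rw [hS]; unfold cliqueDeg; congr 1
    omega
  have h1 : 0 < S.card := by omega
  obtain ⟨Q₁, hQ₁⟩ := Finset.card_pos.1 h1
  have h2 : 0 < (S.erase Q₁).card := by
    rw [Finset.card_erase_of_mem hQ₁]; omega
  obtain ⟨Q₂, hQ₂⟩ := Finset.card_pos.1 h2
  have h3 : 0 < ((S.erase Q₁).erase Q₂).card := by
    rw [Finset.card_erase_of_mem hQ₂, Finset.card_erase_of_mem hQ₁]; omega
  obtain ⟨Q₃, hQ₃⟩ := Finset.card_pos.1 h3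
  obtain ⟨h32, h3S⟩ := Finset.mem_erase.1 hQ₃
  obtain ⟨h31, h3S⟩ := Finset.mem_erase.1 h3S
  obtain ⟨h21, h2S⟩ := Finset.mem_erase.1 hQ₂
  exact ⟨Q₁, Q₂, Q₃, Ne.symm h21, Ne.symm h31, Ne.symm h32,
    (hmem Q₁).1 hQ₁, (hmem Q₂).1 h2S, (hmem Q₃).1 h3S⟩

end Part6a
section Part6b
variable [DecidableEq V] {G : SimpleGraph V} {k : ℕ}

/-- Restriction of a sub-`k`-tree rooted at `C` to a region `U` closed under
adjacency outside `C`. -/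
lemma builtFrom_region_restrict {C U A : Finset V}
    (hUclosed : ∀ x ∈ U, ∀ y, G.Adj x y → y ∉ C → y ∈ U)
    (hb : BuiltFrom G k C A) :
    BuiltFrom G k C (C ∪ (A ∩ U)) := by
  classical
  have hCA : C ⊆ A := hb.base_subset
  set W := (A \ C) \ U with hW
  have h1 : A \ W = C ∪ (A ∩ U) := by
    ext z
    simp only [hW, Finset.mem_sdiff, Finset.mem_union, Finset.mem_inter]
    constructor
    · rintro ⟨hzA, hz⟩
      by_cases hzC : z ∈ C
      · exact Or.inl hzC
      · refine Or.inr ⟨hzA, ?_⟩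
        by_contra hzU
        exact hz ⟨⟨hzA, hzC⟩, hzU⟩
    · rintro (hzC | ⟨hzA, hzU⟩)
      · exact ⟨hCA hzC, fun h => h.1.2 hzC⟩
      · exact ⟨hzA, fun h => h.2 hzU⟩
  rw [← h1]
  apply hb.restrict
  · intro x hx
    rw [hW] at hx
    exact (Finset.mem_sdiff.1 (Finset.mem_sdiff.1 hx).1).2
  · intro x hx y hyA hxy
    rw [hW] at hx
    have hxU : x ∉ U := (Finset.mem_sdiff.1 hx).2
    have hxC : x ∉ C := (Finset.mem_sdiff.1 (Finset.mem_sdiff.1 hx).1).2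
    by_cases hyC : y ∈ C
    · exact Or.inr hyC
    · left
      rw [hW]
      refine Finset.mem_sdiff.2 ⟨Finset.mem_sdiff.2 ⟨hyA, hyC⟩, ?_⟩
      intro hyU
      exact hxU (hUclosed y hyU x hxy.symm hxC)

/-- Merging extensions in two separated regions. -/
lemma builtFrom_region_merge {C U U' ρ τ : Finset V}
    (hU'C : ∀ x ∈ U', x ∉ C)
    (hdisj : ∀ x ∈ U, x ∉ U')
    (hUclosed : ∀ x ∈ U, ∀ y, G.Adj x y → y ∉ C → y ∈ U)
    (hρ : ρ ⊆ U) (hτ : τ ⊆ U')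
    (h1 : BuiltFrom G k C (C ∪ ρ)) (h2 : BuiltFrom G k C (C ∪ τ)) :
    BuiltFrom G k C (C ∪ (ρ ∪ τ)) := by
  have hres : (C ∪ ρ) ∪ (C ∪ τ) = C ∪ (ρ ∪ τ) := by
    ext z
    simp only [Finset.mem_union]
    tauto
  rw [← hres]
  apply h1.merge h2 (Finset.subset_union_left)
  · intro x hx hxC
    have hxτ : x ∈ τ := by
      rcases Finset.mem_union.1 hx with h | h
      · exact absurd h hxC
      · exact h
    intro hmem
    rcases Finset.mem_union.1 hmem with h | h
    · exact hxC h
    · exact hdisj x (hρ h) (hτ hxτ)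
  · intro x hx hxC y hy hyC
    have hxτ : x ∈ τ := by
      rcases Finset.mem_union.1 hx with h | h
      · exact absurd h hxC
      · exact h
    have hyρ : y ∈ ρ := by
      rcases Finset.mem_union.1 hy with h | h
      · exact absurd h hyC
      · exact h
    intro hadj
    have hxC' : x ∉ C := hU'C x (hτ hxτ)
    have : x ∈ U := hUclosed y (hρ hyρ) x hadj.symm hxC'
    exact hdisj x this (hτ hxτ)

lemma sum_triple {α : Type*} [DecidableEq α] (k : ℕ) (F₁ F₂ F₃ : Finset (Finset α)) :
    (∑ t ∈ F₁ ×ˢ (F₂ ×ˢ F₃), (k + t.1.card + t.2.1.card + t.2.2.card))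
      = F₁.card * F₂.card * F₃.card * k
        + F₂.card * F₃.card * (∑ ρ ∈ F₁, ρ.card)
        + F₁.card * F₃.card * (∑ ρ ∈ F₂, ρ.card)
        + F₁.card * F₂.card * (∑ ρ ∈ F₃, ρ.card) := by
  rw [Finset.sum_product]
  simp only [Finset.sum_product]
  simp only [Finset.sum_add_distrib, Finset.sum_const, smul_eq_mul, Finset.mul_sum,
    Finset.sum_mul]
  ring
end Part6b
section Core
variable [Fintype V] [DecidableEq V]

lemma mem_subKTrees_raw {G : SimpleGraph V} {k : ℕ} {D A : Finset V} :
    A ∈ subKTrees G k D ↔ D ⊆ A ∧ IsKTreeOn G k A := by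
  simp [subKTrees]

set_option maxHeartbeats 1600000 in
lemma core {G : SimpleGraph V} {k : ℕ} (hk : 1 ≤ k)
    (hG : IsKTreeOn G k (Finset.univ : Finset V)) {C : Finset V} (hC : G.IsNClique k C)
    {v₁ v₂ v₃ : V}
    (h12 : v₁ ≠ v₂) (h13 : v₁ ≠ v₃) (h23 : v₂ ≠ v₃)
    (hv₁C : v₁ ∉ C) (hv₂C : v₂ ∉ C) (hv₃C : v₃ ∉ C)
    (ha₁ : ∀ c ∈ C, G.Adj v₁ c) (ha₂ : ∀ c ∈ C, G.Adj v₂ c) (ha₃ : ∀ c ∈ C, G.Adj v₃ c)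
    (hmin2 : (extFam G k C (compF G C v₁)).card ≤ (extFam G k C (compF G C v₂)).card)
    (hmin3 : (extFam G k C (compF G C v₁)).card ≤ (extFam G k C (compF G C v₃)).card) :
    ∃ C₂ : Finset V, G.IsNClique k C₂ ∧ CliqueAdj G k C C₂ ∧ kMean G k C < kMean G k C₂ := by
  classical
  have hCcard : C.card = k := hC.2
  have hCuniv : BuiltFrom G k C Finset.univ := hG.reroot C (Finset.subset_univ C) hC
  have huniq : ∀ z z' : V, z ∉ C → z' ∉ C → (∀ c ∈ C, G.Adj z c) → (∀ c ∈ C, G.Adj z' c) →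
      (Hout G C).Reachable z z' → z = z' := by
    intro z z' hz hz' haz haz' hr
    exact hCuniv.ext_unique hCcard z z' hz hz' haz haz' (reachIn_univ_of_reachable hz hr)
  -- region basics
  have hcompC : ∀ v x : V, v ∉ C → x ∈ compF G C v → x ∉ C := by
    intro v x hv hx
    exact (reachIn_univ_of_reachable hv (mem_compF.1 hx)).right_mem.2
  have hcompClosed : ∀ v : V, v ∉ C →
      ∀ x ∈ compF G C v, ∀ y, G.Adj x y → y ∉ C → y ∈ compF G C v := by
    intro v hv x hx y hxy hyC
    have hxC : x ∉ C := hcompC v x hv hx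
    rw [mem_compF] at hx ⊢
    exact hx.trans (SimpleGraph.Adj.reachable ⟨hxy, hxC, hyC⟩)
  set U₁ := compF G C v₁ with hU₁d
  set U₂ := compF G C v₂ with hU₂d
  set U₃ := ((Finset.univ \ C) \ U₁) \ U₂ with hU₃d
  have hv₁U₁ : v₁ ∈ U₁ := mem_compF.2 (SimpleGraph.Reachable.refl v₁)
  have hv₂U₂ : v₂ ∈ U₂ := mem_compF.2 (SimpleGraph.Reachable.refl v₂)
  have hU₁C : ∀ x ∈ U₁, x ∉ C := fun x hx => hcompC v₁ x hv₁C hx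
  have hU₂C : ∀ x ∈ U₂, x ∉ C := fun x hx => hcompC v₂ x hv₂C hx
  have hU₃C : ∀ x ∈ U₃, x ∉ C := by
    intro x hx
    exact (Finset.mem_sdiff.1 (Finset.mem_sdiff.1 (Finset.mem_sdiff.1 hx).1).1).2
  have hU₁cl : ∀ x ∈ U₁, ∀ y, G.Adj x y → y ∉ C → y ∈ U₁ := fun x hx => hcompClosed v₁ hv₁C x hx
  have hU₂cl : ∀ x ∈ U₂, ∀ y, G.Adj x y → y ∉ C → y ∈ U₂ := fun x hx => hcompClosed v₂ hv₂C x hx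
  have hd12 : ∀ x ∈ U₁, x ∉ U₂ := by
    intro x hx hx2
    exact h12 (huniq v₁ v₂ hv₁C hv₂C ha₁ ha₂
      ((mem_compF.1 hx).trans (mem_compF.1 hx2).symm))
  have hd13 : ∀ x ∈ U₁, x ∉ U₃ := by
    intro x hx hx3
    exact (Finset.mem_sdiff.1 (Finset.mem_sdiff.1 hx3).1).2 hx
  have hd23 : ∀ x ∈ U₂, x ∉ U₃ := by
    intro x hx hx3
    exact (Finset.mem_sdiff.1 hx3).2 hx
  have hU₃cl : ∀ x ∈ U₃, ∀ y, G.Adj x y → y ∉ C → y ∈ U₃ := by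
    intro x hx y hxy hyC
    have hxC : x ∉ C := hU₃C x hx
    have hyU₁ : y ∉ U₁ := by
      intro hy
      exact hd13 x (hU₁cl y hy x hxy.symm hxC) hx
    have hyU₂ : y ∉ U₂ := by
      intro hy
      exact hd23 x (hU₂cl y hy x hxy.symm hxC) hx
    exact Finset.mem_sdiff.2 ⟨Finset.mem_sdiff.2 ⟨Finset.mem_sdiff.2
      ⟨Finset.mem_univ y, hyC⟩, hyU₁⟩, hyU₂⟩
  have hcover : ∀ x : V, x ∈ C ∨ x ∈ U₁ ∨ x ∈ U₂ ∨ x ∈ U₃ := by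
    intro x
    by_cases h1 : x ∈ C
    · exact Or.inl h1
    by_cases h2 : x ∈ U₁
    · exact Or.inr (Or.inl h2)
    by_cases h3 : x ∈ U₂
    · exact Or.inr (Or.inr (Or.inl h3))
    refine Or.inr (Or.inr (Or.inr ?_))
    exact Finset.mem_sdiff.2 ⟨Finset.mem_sdiff.2 ⟨Finset.mem_sdiff.2
      ⟨Finset.mem_univ x, h1⟩, h2⟩, h3⟩
  -- families
  set F₁ := extFam G k C U₁ with hF₁d
  set F₂ := extFam G k C U₂ with hF₂d
  set F₃ := extFam G k C U₃ with hF₃d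
  set ψ : Finset V × Finset V × Finset V → Finset V :=
    (fun t => C ∪ t.1 ∪ t.2.1 ∪ t.2.2) with hψd
  set P := F₁ ×ˢ (F₂ ×ˢ F₃) with hPd
  have hmemP : ∀ t : Finset V × Finset V × Finset V, t ∈ P ↔
      (t.1 ⊆ U₁ ∧ BuiltFrom G k C (C ∪ t.1)) ∧ (t.2.1 ⊆ U₂ ∧ BuiltFrom G k C (C ∪ t.2.1))
        ∧ (t.2.2 ⊆ U₃ ∧ BuiltFrom G k C (C ∪ t.2.2)) := by
    intro t
    rw [hPd, Finset.mem_product, Finset.mem_product, hF₁d, hF₂d, hF₃d,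
      mem_extFam, mem_extFam, mem_extFam]
  -- recovery of components
  have hrec : ∀ ρ₁ ρ₂ ρ₃ : Finset V, ρ₁ ⊆ U₁ → ρ₂ ⊆ U₂ → ρ₃ ⊆ U₃ →
      (C ∪ ρ₁ ∪ ρ₂ ∪ ρ₃) ∩ U₁ = ρ₁ ∧ (C ∪ ρ₁ ∪ ρ₂ ∪ ρ₃) ∩ U₂ = ρ₂
        ∧ (C ∪ ρ₁ ∪ ρ₂ ∪ ρ₃) ∩ U₃ = ρ₃ := by
    intro ρ₁ ρ₂ ρ₃ h1 h2 h3
    refine ⟨?_, ?_, ?_⟩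
    · ext x
      simp only [Finset.mem_inter, Finset.mem_union]
      constructor
      · rintro ⟨(((hx | hx) | hx) | hx), hxU⟩
        · exact absurd hx (hU₁C x hxU)
        · exact hx
        · exact absurd (h2 hx) (hd12 x hxU)
        · exact absurd (h3 hx) (hd13 x hxU)
      · intro hx; exact ⟨Or.inl (Or.inl (Or.inr hx)), h1 hx⟩
    · ext x
      simp only [Finset.mem_inter, Finset.mem_union]
      constructor
      · rintro ⟨(((hx | hx) | hx) | hx), hxU⟩
        · exact absurd hx (hU₂C x hxU)
        · exact absurd hxU (hd12 x (h1 hx))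
        · exact hx
        · exact absurd (h3 hx) (hd23 x hxU)
      · intro hx; exact ⟨Or.inl (Or.inr hx), h2 hx⟩
    · ext x
      simp only [Finset.mem_inter, Finset.mem_union]
      constructor
      · rintro ⟨(((hx | hx) | hx) | hx), hxU⟩
        · exact absurd hx (hU₃C x hxU)
        · exact absurd hxU (hd13 x (h1 hx))
        · exact absurd hxU (hd23 x (h2 hx))
        · exact hx
      · intro hx; exact ⟨Or.inr hx, h3 hx⟩
  -- forward images
  have himgmem : ∀ t ∈ P, ψ t ∈ subKTrees G k C ∧ (ψ t) ∩ U₁ = t.1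
      ∧ (ψ t) ∩ U₂ = t.2.1 ∧ (ψ t) ∩ U₃ = t.2.2 := by
    intro t ht
    obtain ⟨⟨h1U, h1b⟩, ⟨h2U, h2b⟩, ⟨h3U, h3b⟩⟩ := (hmemP t).1 ht
    have hm23 : BuiltFrom G k C (C ∪ (t.2.1 ∪ t.2.2)) :=
      builtFrom_region_merge hU₃C hd23 hU₂cl h2U h3U h2b h3b
    have hU23C : ∀ x ∈ U₂ ∪ U₃, x ∉ C := by
      intro x hx
      rcases Finset.mem_union.1 hx with h | h
      · exact hU₂C x h
      · exact hU₃C x h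
    have hd1_23 : ∀ x ∈ U₁, x ∉ U₂ ∪ U₃ := by
      intro x hx hmem
      rcases Finset.mem_union.1 hmem with h | h
      · exact hd12 x hx h
      · exact hd13 x hx h
    have hall : BuiltFrom G k C (C ∪ (t.1 ∪ (t.2.1 ∪ t.2.2))) :=
      builtFrom_region_merge hU23C hd1_23 hU₁cl h1U
        (Finset.union_subset_union h2U h3U) h1b hm23
    have hψeq : ψ t = C ∪ (t.1 ∪ (t.2.1 ∪ t.2.2)) := by
      rw [hψd]
      simp only [Finset.union_assoc]
    refine ⟨(mem_subKTrees_iff hC).2 (by rw [hψeq]; exact hall), ?_⟩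
    have h := hrec t.1 t.2.1 t.2.2 h1U h2U h3U
    exact h
  have himg : subKTrees G k C = P.image ψ := by
    ext A
    constructor
    · intro hA
      have hb := (mem_subKTrees_iff hC).1 hA
      have hbC : C ⊆ A := hb.base_subset
      refine Finset.mem_image.2 ⟨⟨A ∩ U₁, A ∩ U₂, A ∩ U₃⟩, ?_, ?_⟩
      · rw [hmemP]
        exact ⟨⟨Finset.inter_subset_right, builtFrom_region_restrict hU₁cl hb⟩,
          ⟨Finset.inter_subset_right, builtFrom_region_restrict hU₂cl hb⟩,
          ⟨Finset.inter_subset_right, builtFrom_region_restrict hU₃cl hb⟩⟩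
      · show C ∪ (A ∩ U₁) ∪ (A ∩ U₂) ∪ (A ∩ U₃) = A
        ext x
        simp only [Finset.mem_union, Finset.mem_inter]
        constructor
        · rintro (((hx | hx) | hx) | hx)
          · exact hbC hx
          · exact hx.1
          · exact hx.1
          · exact hx.1
        · intro hxA
          rcases hcover x with h | h | h | h
          · exact Or.inl (Or.inl (Or.inl h))
          · exact Or.inl (Or.inl (Or.inr ⟨hxA, h⟩))
          · exact Or.inl (Or.inr ⟨hxA, h⟩)
          · exact Or.inr ⟨hxA, h⟩
    · intro hA
      obtain ⟨t, ht, rfl⟩ := Finset.mem_image.1 hA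
      exact (himgmem t ht).1
  have hinjψ : ∀ t ∈ P, ∀ t' ∈ P, ψ t = ψ t' → t = t' := by
    intro t ht t' ht' heq
    obtain ⟨-, r1, r2, r3⟩ := himgmem t ht
    obtain ⟨-, s1, s2, s3⟩ := himgmem t' ht'
    have e1 : t.1 = t'.1 := by rw [← r1, ← s1, heq]
    have e2 : t.2.1 = t'.2.1 := by rw [← r2, ← s2, heq]
    have e3 : t.2.2 = t'.2.2 := by rw [← r3, ← s3, heq]
    exact Prod.ext e1 (Prod.ext e2 e3)
  have hinjψ' : Set.InjOn ψ ↑P := by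
    intro t ht t' ht' heq
    exact hinjψ t (Finset.mem_coe.1 ht) t' (Finset.mem_coe.1 ht') heq
  have hcardψ : ∀ t ∈ P, (ψ t).card = k + t.1.card + t.2.1.card + t.2.2.card := by
    intro t ht
    obtain ⟨⟨h1U, _⟩, ⟨h2U, _⟩, ⟨h3U, _⟩⟩ := (hmemP t).1 ht
    have d1 : Disjoint C t.1 := by
      rw [Finset.disjoint_left]
      intro x hxC hx1
      exact (hU₁C x (h1U hx1)) hxC
    have d2 : Disjoint (C ∪ t.1) t.2.1 := by
      rw [Finset.disjoint_left]
      intro x hx hx2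
      rcases Finset.mem_union.1 hx with h | h
      · exact hU₂C x (h2U hx2) h
      · exact hd12 x (h1U h) (h2U hx2)
    have d3 : Disjoint (C ∪ t.1 ∪ t.2.1) t.2.2 := by
      rw [Finset.disjoint_left]
      intro x hx hx3
      rcases Finset.mem_union.1 hx with h | h
      · rcases Finset.mem_union.1 h with h' | h'
        · exact hU₃C x (h3U hx3) h'
        · exact hd13 x (h1U h') (h3U hx3)
      · exact hd23 x (h2U h) (h3U hx3)
    show (C ∪ t.1 ∪ t.2.1 ∪ t.2.2).card = k + t.1.card + t.2.1.card + t.2.2.card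
    rw [Finset.card_union_of_disjoint d3, Finset.card_union_of_disjoint d2,
      Finset.card_union_of_disjoint d1, hCcard]
  have hn₁ : (subKTrees G k C).card = F₁.card * (F₂.card * F₃.card) := by
    rw [himg, Finset.card_image_of_injOn hinjψ', hPd, Finset.card_product,
      Finset.card_product]
  have hW₁ : ∑ A ∈ subKTrees G k C, A.card
      = F₁.card * F₂.card * F₃.card * k + F₂.card * F₃.card * (∑ ρ ∈ F₁, ρ.card)
        + F₁.card * F₃.card * (∑ ρ ∈ F₂, ρ.card)
        + F₁.card * F₂.card * (∑ ρ ∈ F₃, ρ.card) := by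
    rw [himg, Finset.sum_image hinjψ]
    rw [Finset.sum_congr rfl hcardψ]
    rw [hPd, sum_triple k F₁ F₂ F₃]
  -- v₁ belongs to every nonempty extension in U₁
  have hv₁mem : ∀ ρ ∈ F₁, ρ ≠ ∅ → v₁ ∈ ρ := by
    intro ρ hρ hne
    obtain ⟨hρU, hb⟩ := mem_extFam.1 hρ
    obtain ⟨w, hw⟩ := Finset.nonempty_iff_ne_empty.2 hne
    have hwU₁ : w ∈ U₁ := hρU hw
    have hwC : w ∉ C := hU₁C w hwU₁
    have hv₁A : v₁ ∈ C ∪ ρ := BuiltFrom.ext_mem hCuniv hb hCcard hv₁C ha₁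
      (Finset.mem_union_right C hw) hwC (mem_compF.1 hwU₁)
    rcases Finset.mem_union.1 hv₁A with h | h
    · exact absurd h hv₁C
    · exact h
  have hemptyF₁ : (∅ : Finset V) ∈ F₁ := by
    rw [hF₁d, mem_extFam]
    exact ⟨Finset.empty_subset U₁, by rw [Finset.union_empty]; exact BuiltFrom.refl⟩
  set R := F₁.filter (fun ρ => v₁ ∈ ρ) with hRd
  have hsingleton : F₁.filter (fun ρ => ¬ v₁ ∈ ρ) = {∅} := by
    ext ρ
    simp only [Finset.mem_filter, Finset.mem_singleton]
    constructor
    · rintro ⟨hρ, hnv⟩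
      by_contra hne
      exact hnv (hv₁mem ρ hρ hne)
    · rintro rfl
      exact ⟨hemptyF₁, Finset.notMem_empty v₁⟩
  have hf₁r : F₁.card = R.card + 1 := by
    have h := Finset.card_filter_add_card_filter_not (s := F₁)
      (p := fun ρ => v₁ ∈ ρ)
    rw [hsingleton] at h
    simp only [Finset.card_singleton] at h
    rw [hRd]
    omega
  have hω₁R : ∑ ρ ∈ F₁, ρ.card = ∑ ρ ∈ R, ρ.card := by
    rw [← Finset.sum_filter_add_sum_filter_not F₁ (fun ρ => v₁ ∈ ρ) (fun ρ => ρ.card)]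
    rw [hsingleton, hRd]
    simp
  -- the clique C₂
  obtain ⟨u, hu⟩ : C.Nonempty := Finset.card_pos.1 (by omega)
  set C₂ := insert v₁ (C.erase u) with hC₂d
  have hv₁erase : v₁ ∉ C.erase u := fun h => hv₁C (Finset.mem_of_mem_erase h)
  have herasesubC : C.erase u ⊆ C := Finset.erase_subset u C
  have hC₂card : C₂.card = k := by
    rw [hC₂d, Finset.card_insert_of_notMem hv₁erase, Finset.card_erase_of_mem hu, hCcard]
    omega
  have hC₂cl : G.IsNClique k C₂ := by
    constructor
    · rw [hC₂d, Finset.coe_insert]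
      refine SimpleGraph.IsClique.insert (hC.1.subset ?_) ?_
      · exact_mod_cast herasesubC
      · intro b hb _
        exact ha₁ b (herasesubC hb)
    · exact hC₂card
  have huC₂ : u ∉ C₂ := by
    rw [hC₂d]
    intro h
    rcases Finset.mem_insert.1 h with h | h
    · exact hv₁C (h ▸ hu)
    · exact (Finset.notMem_erase u C) h
  have huadj₂ : ∀ c ∈ C₂, G.Adj u c := by
    intro c hc
    rw [hC₂d] at hc
    rcases Finset.mem_insert.1 hc with rfl | h
    · exact (ha₁ u hu).symm
    · exact hC.1 hu (herasesubC h) (Finset.ne_of_mem_erase h).symm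
  have hCsubst : ∀ {A : Finset V}, u ∈ A → C.erase u ⊆ A → C ⊆ A := by
    intro A huA hsub x hx
    by_cases hxu : x = u
    · exact hxu ▸ huA
    · exact hsub (Finset.mem_erase.2 ⟨hxu, hx⟩)
  have heraseC₂ : C.erase u ⊆ C₂ := by
    rw [hC₂d]; exact Finset.subset_insert v₁ (C.erase u)
  have hv₁C₂ : v₁ ∈ C₂ := by rw [hC₂d]; exact Finset.mem_insert_self _ _
  -- split of subKTrees C₂
  set Wst := (subKTrees G k C).filter (fun A => v₁ ∈ A) with hWd
  set B := (subKTrees G k C₂).filter (fun A => u ∉ A) with hBd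
  have hWchar : ∀ A, A ∈ Wst ↔ (A ∈ subKTrees G k C₂ ∧ u ∈ A) := by
    intro A
    rw [hWd, Finset.mem_filter, mem_subKTrees_raw, mem_subKTrees_raw]
    constructor
    · rintro ⟨⟨hCA, hT⟩, hv₁A⟩
      refine ⟨⟨?_, hT⟩, hCA hu⟩
      rw [hC₂d]
      exact Finset.insert_subset hv₁A (herasesubC.trans hCA)
    · rintro ⟨⟨hC₂A, hT⟩, huA⟩
      exact ⟨⟨hCsubst huA (heraseC₂.trans hC₂A), hT⟩, hC₂A hv₁C₂⟩
  have hsplit₂ : subKTrees G k C₂ = Wst ∪ B := by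
    ext A
    rw [Finset.mem_union, hWchar A, hBd, Finset.mem_filter]
    constructor
    · intro hA
      by_cases huA : u ∈ A
      · exact Or.inl ⟨hA, huA⟩
      · exact Or.inr ⟨hA, huA⟩
    · rintro (⟨hA, _⟩ | ⟨hA, _⟩) <;> exact hA
  have hdisjWB : Disjoint Wst B := by
    rw [Finset.disjoint_left]
    intro A hA hA'
    rw [hBd, Finset.mem_filter] at hA'
    exact hA'.2 ((hWchar A).1 hA).2
  -- Wst as an image
  set P' := R ×ˢ (F₂ ×ˢ F₃) with hP'd
  have hPP' : P' ⊆ P := by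
    rw [hP'd, hPd, hRd]
    exact Finset.product_subset_product (Finset.filter_subset _ _) (Finset.Subset.refl _)
  have hinjψ'' : ∀ t ∈ P', ∀ t' ∈ P', ψ t = ψ t' → t = t' := by
    intro t ht t' ht' heq
    exact hinjψ t (hPP' ht) t' (hPP' ht') heq
  have hWimg : Wst = P'.image ψ := by
    ext A
    constructor
    · intro hAW
      obtain ⟨hA, hv₁A⟩ := Finset.mem_filter.1 (hWd ▸ hAW)
      obtain ⟨t, ht, rfl⟩ := Finset.mem_image.1 (himg ▸ hA)
      obtain ⟨-, r1, -, -⟩ := himgmem t ht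
      refine Finset.mem_image.2 ⟨t, ?_, rfl⟩
      rw [hP'd, Finset.mem_product]
      rw [hPd, Finset.mem_product] at ht
      refine ⟨?_, ht.2⟩
      rw [hRd, Finset.mem_filter]
      refine ⟨ht.1, ?_⟩
      rw [← r1]
      exact Finset.mem_inter.2 ⟨hv₁A, hv₁U₁⟩
    · intro hA
      obtain ⟨t, ht, rfl⟩ := Finset.mem_image.1 hA
      have htP : t ∈ P := hPP' ht
      rw [hWd, Finset.mem_filter]
      refine ⟨(himgmem t htP).1, ?_⟩
      have hv₁t : v₁ ∈ t.1 := by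
        rw [hP'd, Finset.mem_product] at ht
        have h1 := ht.1
        rw [hRd, Finset.mem_filter] at h1
        exact h1.2
      show v₁ ∈ C ∪ t.1 ∪ t.2.1 ∪ t.2.2
      exact Finset.mem_union_left _ (Finset.mem_union_left _ (Finset.mem_union_right _ hv₁t))
  have hn₂ : (subKTrees G k C₂).card = R.card * (F₂.card * F₃.card) + B.card := by
    rw [hsplit₂, Finset.card_union_of_disjoint hdisjWB, hWimg,
      Finset.card_image_of_injOn
        (fun t ht t' ht' heq => hinjψ'' t (Finset.mem_coe.1 ht) t' (Finset.mem_coe.1 ht') heq),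
      hP'd, Finset.card_product, Finset.card_product]
  have hW₂ : ∑ A ∈ subKTrees G k C₂, A.card
      = (R.card * F₂.card * F₃.card * k + F₂.card * F₃.card * (∑ ρ ∈ R, ρ.card)
        + R.card * F₃.card * (∑ ρ ∈ F₂, ρ.card) + R.card * F₂.card * (∑ ρ ∈ F₃, ρ.card))
        + ∑ A ∈ B, A.card := by
    rw [hsplit₂, Finset.sum_union hdisjWB, hWimg, Finset.sum_image hinjψ'',
      Finset.sum_congr rfl (fun t ht => hcardψ t (hPP' ht)), hP'd, sum_triple k R F₂ F₃]
  -- analysis of B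
  have huniv₂ : BuiltFrom G k C₂ Finset.univ := hG.reroot C₂ (Finset.subset_univ C₂) hC₂cl
  have hBmem : ∀ b ∈ B, BuiltFrom G k C₂ b ∧ u ∉ b := by
    intro b hb
    rw [hBd, Finset.mem_filter, mem_subKTrees_raw] at hb
    exact ⟨hb.1.2.reroot C₂ hb.1.1 hC₂cl, hb.2⟩
  have hBadj : ∀ b ∈ B, ∀ w ∈ b, w ∉ C₂ → ¬ G.Adj u w := by
    intro b hb w hw hwC₂ hadj
    obtain ⟨hbB, hub⟩ := hBmem b hb
    exact hub (BuiltFrom.ext_mem huniv₂ hbB hC₂card huC₂ huadj₂ hw hwC₂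
      (SimpleGraph.Adj.reachable (G := Hout G C₂) ⟨hadj, huC₂, hwC₂⟩))
  have hBregion : ∀ b ∈ B, ∀ w ∈ b, w ∈ C₂ ∨ w ∈ U₁ := by
    intro b hb w hw
    by_contra hcon
    push_neg at hcon
    obtain ⟨hwC₂, hwU₁⟩ := hcon
    obtain ⟨hbB, hub⟩ := hBmem b hb
    have hwu : w ≠ u := fun h => hub (h ▸ hw)
    have hwC : w ∉ C := by
      intro h
      exact hwC₂ (heraseC₂ (Finset.mem_erase.2 ⟨hwu, h⟩))
    obtain ⟨z, -, hzC, hzadj, hzreach⟩ := hCuniv.exists_ext hCcard w (Finset.mem_univ w) hwC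
    have hzv₁ : z ≠ v₁ := by
      rintro rfl
      exact hwU₁ (mem_compF.2 hzreach.to_reachable)
    have hzC₂ : z ∉ C₂ := by
      rw [hC₂d]
      intro h
      rcases Finset.mem_insert.1 h with h | h
      · exact hzv₁ h
      · exact hzC (herasesubC h)
    have htrans : ReachIn G C₂ Finset.univ z w := by
      refine hzreach.transfer ?_
      intro y hy
      have hyC : y ∉ C := hy.right_mem.2
      have hyv₁ : y ≠ v₁ := fun heq =>
        hzv₁ (huniq z v₁ hzC hv₁C hzadj ha₁ (heq ▸ hy.to_reachable))
      rw [hC₂d]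
      intro h
      rcases Finset.mem_insert.1 h with h | h
      · exact hyv₁ h
      · exact hyC (herasesubC h)
    have hreach₂ : (Hout G C₂).Reachable u w :=
      (SimpleGraph.Adj.reachable (G := Hout G C₂)
        ⟨(hzadj u hu).symm, huC₂, hzC₂⟩).trans htrans.to_reachable
    exact hub (BuiltFrom.ext_mem huniv₂ hbB hC₂card huC₂ huadj₂ hw hwC₂ hreach₂)
  -- injection from B into R
  have hφ : ∀ b ∈ B, b ∩ U₁ ∈ R ∧ b = C.erase u ∪ (b ∩ U₁) := by
    intro b hb
    obtain ⟨hbB, hub⟩ := hBmem b hb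
    have hC₂b : C₂ ⊆ b := hbB.base_subset
    have hv₁b : v₁ ∈ b := hC₂b hv₁C₂
    have hrecb : b = C.erase u ∪ (b ∩ U₁) := by
      ext x
      simp only [Finset.mem_union, Finset.mem_inter]
      constructor
      · intro hx
        rcases hBregion b hb x hx with h | h
        · rw [hC₂d] at h
          rcases Finset.mem_insert.1 h with rfl | h
          · exact Or.inr ⟨hx, hv₁U₁⟩
          · exact Or.inl h
        · exact Or.inr ⟨hx, h⟩
      · rintro (hx | ⟨hx, -⟩)
        · exact hC₂b (heraseC₂ hx)
        · exact hx
    have hgrow : BuiltFrom G k C₂ (insert u b) := by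
      refine BuiltFrom.grow b u C₂ hbB hub hC₂b hC₂cl ?_
      intro w hw
      constructor
      · intro hadj
        by_contra hwC₂
        exact hBadj b hb w hw hwC₂ hadj
      · intro hwC₂
        exact huadj₂ w hwC₂
    have hins : insert u b = C ∪ (b ∩ U₁) := by
      ext x
      simp only [Finset.mem_insert, Finset.mem_union]
      constructor
      · rintro (rfl | hx)
        · exact Or.inl hu
        · rw [hrecb] at hx
          rcases Finset.mem_union.1 hx with h | h
          · exact Or.inl (herasesubC h)
          · exact Or.inr h
      · rintro (hx | hx)
        · by_cases hxu : x = u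
          · exact Or.inl hxu
          · exact Or.inr (hC₂b (heraseC₂ (Finset.mem_erase.2 ⟨hxu, hx⟩)))
        · exact Or.inr (Finset.mem_inter.1 hx).1
    have hbuilt : BuiltFrom G k C (C ∪ (b ∩ U₁)) := by
      have hT : IsKTreeOn G k (insert u b) := hgrow.isKTreeOn hC₂cl
      have hCsub : C ⊆ insert u b := by
        rw [hins]; exact Finset.subset_union_left
      have h := hT.reroot C hCsub hC
      rwa [hins] at h
    refine ⟨?_, hrecb⟩
    rw [hRd, Finset.mem_filter, hF₁d, mem_extFam]
    exact ⟨⟨Finset.inter_subset_right, hbuilt⟩, Finset.mem_inter.2 ⟨hv₁b, hv₁U₁⟩⟩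
  have hnB : B.card ≤ R.card := by
    apply Finset.card_le_card_of_injOn (fun b => b ∩ U₁) (fun b hb => (hφ b hb).1)
    intro b hb b' hb' heq
    rw [(hφ b (Finset.mem_coe.1 hb)).2, (hφ b' (Finset.mem_coe.1 hb')).2]
    simp only at heq
    rw [heq]
  have hWB : k * B.card ≤ ∑ A ∈ B, A.card := by
    calc k * B.card = ∑ _A ∈ B, k := by rw [Finset.sum_const, smul_eq_mul, mul_comm]
    _ ≤ ∑ A ∈ B, A.card := by
        refine Finset.sum_le_sum ?_
        intro b hb
        have hsub : C₂ ⊆ b := (hBmem b hb).1.base_subset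
        calc k = C₂.card := hC₂card.symm
        _ ≤ b.card := Finset.card_le_card hsub
  -- accessibility of extension families
  have hacc : ∀ U : Finset V, (∀ x ∈ U, x ∉ C) → Accessible (extFam G k C U) := by
    intro U hUC ρ hρ hρne
    obtain ⟨hρU, hb⟩ := mem_extFam.1 hρ
    obtain ⟨w, hw⟩ := Finset.nonempty_iff_ne_empty.2 hρne
    rcases hb.inversion with h | ⟨s, x, Cx, hbs, hxs, hCxs, hclx, hadjx, hA⟩
    · exact absurd (h ▸ Finset.mem_union_right C hw) (hUC w (hρU hw))
    · have hCs : C ⊆ s := hbs.base_subset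
      have hxρ : x ∈ ρ := by
        have hxA : x ∈ C ∪ ρ := hA ▸ Finset.mem_insert_self x s
        rcases Finset.mem_union.1 hxA with h | h
        · exact absurd (hCs h) hxs
        · exact h
      have hxC : x ∉ C := fun h => hxs (hCs h)
      have hseq : s = C ∪ ρ.erase x := by
        have h1 : s = (C ∪ ρ).erase x := by
          rw [hA, Finset.erase_insert hxs]
        rw [h1, Finset.erase_union_distrib, Finset.erase_eq_of_notMem hxC]
      refine ⟨x, hxρ, ?_⟩
      rw [mem_extFam]
      exact ⟨(Finset.erase_subset x ρ).trans hρU, by rw [← hseq]; exact hbs⟩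
  have hω₂bound : 2 * (∑ ρ ∈ F₂, ρ.card) + F₂.card ≤ F₂.card * F₂.card := by
    have h := Accessible.sum_card_bound (extFam G k C U₂) (hacc U₂ hU₂C)
    rw [← hF₂d] at h
    exact h
  have hω₃bound : 2 * (∑ ρ ∈ F₃, ρ.card) + F₃.card ≤ F₃.card * F₃.card := by
    have h := Accessible.sum_card_bound (extFam G k C U₃) (hacc U₃ hU₃C)
    rw [← hF₃d] at h
    exact h
  -- small facts
  have hsingF₁ : ({v₁} : Finset V) ∈ R := by
    rw [hRd, Finset.mem_filter, hF₁d, mem_extFam]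
    refine ⟨⟨?_, ?_⟩, Finset.mem_singleton_self v₁⟩
    · intro x hx
      rw [Finset.mem_singleton] at hx
      exact hx ▸ hv₁U₁
    · have he : C ∪ {v₁} = insert v₁ C := by
        rw [Finset.union_comm, ← Finset.insert_eq]
      rw [he]
      exact BuiltFrom.grow C v₁ C BuiltFrom.refl hv₁C (Finset.Subset.refl C) hC
        (fun w hw => ⟨fun _ => hw, fun _ => ha₁ w hw⟩)
  have hr1 : 1 ≤ R.card := Finset.card_pos.2 ⟨{v₁}, hsingF₁⟩
  have hω₁r : R.card ≤ ∑ ρ ∈ R, ρ.card := by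
    calc R.card = ∑ _ρ ∈ R, 1 := by simp
    _ ≤ _ := by
        refine Finset.sum_le_sum ?_
        intro ρ hρ
        rw [hRd, Finset.mem_filter] at hρ
        exact Finset.card_pos.2 ⟨v₁, hρ.2⟩
  have hf₂min : R.card + 1 ≤ F₂.card := by
    rw [← hf₁r]
    exact hmin2
  have hf₃min : R.card + 1 ≤ F₃.card := by
    rw [← hf₁r]
    refine hmin3.trans (Finset.card_le_card (extFam_mono ?_))
    intro x hx
    have hxC : x ∉ C := hcompC v₃ x hv₃C hx
    have hxU₁ : x ∉ U₁ := by
      intro h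
      exact h13 (huniq v₁ v₃ hv₁C hv₃C ha₁ ha₃
        ((mem_compF.1 h).trans (mem_compF.1 hx).symm))
    have hxU₂ : x ∉ U₂ := by
      intro h
      exact h23 (huniq v₂ v₃ hv₂C hv₃C ha₂ ha₃
        ((mem_compF.1 h).trans (mem_compF.1 hx).symm))
    exact Finset.mem_sdiff.2 ⟨Finset.mem_sdiff.2 ⟨Finset.mem_sdiff.2
      ⟨Finset.mem_univ x, hxC⟩, hxU₁⟩, hxU₂⟩
  -- the big arithmetic comparison
  have harith := key_arith (k : ℤ) (R.card) (F₂.card) (F₃.card) (∑ ρ ∈ R, ρ.card)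
      (∑ ρ ∈ F₂, ρ.card) (∑ ρ ∈ F₃, ρ.card) (B.card) (∑ A ∈ B, A.card)
      (by positivity) (by exact_mod_cast hr1) (by exact_mod_cast hf₂min)
      (by exact_mod_cast hf₃min) (Int.natCast_nonneg _) (by exact_mod_cast hnB)
      (by exact_mod_cast hWB) (by exact_mod_cast hω₁r)
      (Finset.sum_nonneg (fun _ _ => Int.natCast_nonneg _))
      (Finset.sum_nonneg (fun _ _ => Int.natCast_nonneg _)) (by exact_mod_cast hω₂bound)
      (by exact_mod_cast hω₃bound)
  have hfinalN : (∑ A ∈ subKTrees G k C, A.card) * (subKTrees G k C₂).card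
      < (∑ A ∈ subKTrees G k C₂, A.card) * (subKTrees G k C).card := by
    rw [hW₁, hW₂, hn₁, hn₂, hf₁r, hω₁R]
    zify
    push_cast at harith ⊢
    linarith [harith]
  have hF₂pos : 0 < F₂.card := by omega
  have hF₃pos : 0 < F₃.card := by omega
  have hn₁pos : 0 < (subKTrees G k C).card := by
    rw [hn₁, hf₁r]
    exact Nat.mul_pos (by omega) (Nat.mul_pos hF₂pos hF₃pos)
  have hn₂pos : 0 < (subKTrees G k C₂).card := by
    rw [hn₂]
    have h1 : 0 < R.card * (F₂.card * F₃.card) :=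
      Nat.mul_pos (by omega) (Nat.mul_pos hF₂pos hF₃pos)
    omega
  refine ⟨C₂, hC₂cl, ⟨?_, insert v₁ C, ?_, Finset.subset_insert v₁ C, ?_⟩, ?_⟩
  · intro h
    exact hv₁C (by rw [h]; exact hv₁C₂)
  · exact hC.insert (fun b hb => ha₁ b hb)
  · rw [hC₂d]
    exact Finset.insert_subset_insert v₁ herasesubC
  · unfold kMean
    have e₁ : ∑ A ∈ subKTrees G k C, ((A.card : ℝ))
        = ((∑ A ∈ subKTrees G k C, A.card : ℕ) : ℝ) := by push_cast; rfl
    have e₂ : ∑ A ∈ subKTrees G k C₂, ((A.card : ℝ))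
        = ((∑ A ∈ subKTrees G k C₂, A.card : ℕ) : ℝ) := by push_cast; rfl
    rw [e₁, e₂, div_lt_div_iff₀ (by exact_mod_cast hn₁pos) (by exact_mod_cast hn₂pos)]
    exact_mod_cast hfinalN





end Core
theorem major_clique_not_max {V : Type*} [Fintype V] [DecidableEq V]
    (k : ℕ) (hk : 1 ≤ k) (G : SimpleGraph V) (hG : IsKTree G k)
    (C₁ : Finset V) (hC₁ : G.IsNClique k C₁) (hmaj : 3 ≤ cliqueDeg G k C₁) :
    ∃ C₂ : Finset V, G.IsNClique k C₂ ∧ CliqueAdj G k C₁ C₂ ∧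
      kMean G k C₁ < kMean G k C₂ := by
  classical
  have hG' : IsKTreeOn G k (Finset.univ : Finset V) := hG
  obtain ⟨Q₁, Q₂, Q₃, h12Q, h13Q, h23Q, ⟨hCQ₁, hQ₁⟩, ⟨hCQ₂, hQ₂⟩, ⟨hCQ₃, hQ₃⟩⟩ :=
    three_cliques hmaj
  obtain ⟨w₁, hw₁C, hQ₁e, hw₁adj⟩ := ext_of_clique hC₁ hQ₁ hCQ₁
  obtain ⟨w₂, hw₂C, hQ₂e, hw₂adj⟩ := ext_of_clique hC₁ hQ₂ hCQ₂
  obtain ⟨w₃, hw₃C, hQ₃e, hw₃adj⟩ := ext_of_clique hC₁ hQ₃ hCQ₃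
  have hne12 : w₁ ≠ w₂ := fun h => h12Q (by rw [hQ₁e, hQ₂e, h])
  have hne13 : w₁ ≠ w₃ := fun h => h13Q (by rw [hQ₁e, hQ₃e, h])
  have hne23 : w₂ ≠ w₃ := fun h => h23Q (by rw [hQ₂e, hQ₃e, h])
  set N₁ := (extFam G k C₁ (compF G C₁ w₁)).card with hN₁
  set N₂ := (extFam G k C₁ (compF G C₁ w₂)).card with hN₂
  set N₃ := (extFam G k C₁ (compF G C₁ w₃)).card with hN₃
  rcases le_total N₁ N₂ with h12' | h12'
  · rcases le_total N₁ N₃ with h13' | h13'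
    · exact core hk hG' hC₁ hne12 hne13 hne23 hw₁C hw₂C hw₃C hw₁adj hw₂adj hw₃adj h12' h13'
    · exact core hk hG' hC₁ hne13.symm (Ne.symm hne23) hne12 hw₃C hw₁C hw₂C
        hw₃adj hw₁adj hw₂adj h13' (h13'.trans h12')
  · rcases le_total N₂ N₃ with h23' | h23'
    · exact core hk hG' hC₁ hne12.symm hne23 hne13 hw₂C hw₁C hw₃C
        hw₂adj hw₁adj hw₃adj h12' h23'
    · exact core hk hG' hC₁ hne13.symm (Ne.symm hne23) hne12 hw₃C hw₁C hw₂C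
        hw₃adj hw₁adj hw₂adj (h23'.trans h12') h23'
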